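/- Let f : ℝ^d → ℝ be twice continuously differentiable with L1-Lipschitz gradient and L2-Lipschitz Hessian, let ε₁, ε₂ ∈ (0,1), and let x₀ satisfy f(x₀) − inf f ≤ Δ < ∞. Suppose x₁ = x₀, and for every j there is a symmetric matrix H_j with ‖H_j − ∇²f(x_j)‖₂ ≤ ε₃ where 0 ≤ ε₃ ≤ ε₂/12, and a unit vector v_j with λ_min(H_j) ≥ v_jᵀH_j v_j − max(ε₂, ‖∇f(x_j)‖)/2; the update is: x_{j+1} = x_j − (ε₂/L2)·sign(v_jᵀ∇f(x_j))·v_j if −(ε₂²/(2·L2²))·v_jᵀH_j v_j − 5·ε₂³/(24·L2²) > ‖∇f(x_j)‖²/(2·L1), and x_{j+1} = x_j − (1/L1)·∇f(x_j) otherwise. Then the first index j* with v_{j*}ᵀH_{j*}v_{j*} > −ε₂/2 and ‖∇f(x_{j*})‖ ≤ ε₁ satisfies j* ≤ 1 + max(24·L2²/ε₂³, 2·L1/ε₁²)·Δ, and at termination ‖∇f(x_{j*})‖ ≤ ε₁ and λ_min(∇²f(x_{j*})) ≥ −2·max(ε₂, ε₁). -/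

import Mathlib

open scoped RealInnerProductSpace

noncomputable def sgn (t : ℝ) : ℝ := if 0 ≤ t then 1 else -1

lemma sgn_sq (t : ℝ) : sgn t ^ 2 = 1 := by unfold sgn; split <;> norm_num

lemma abs_sgn (t : ℝ) : |sgn t| = 1 := by unfold sgn; split <;> norm_num

lemma sgn_mul_self (t : ℝ) : sgn t * t = |t| := by
  rcases le_or_gt 0 t with h | h
  · rw [sgn, if_pos h, abs_of_nonneg h]; ring
  · rw [sgn, if_neg (not_le.2 h), abs_of_neg h]; ring

private lemma phi_le {φ ψ : ℝ → ℝ} (hd : ∀ t, HasDerivAt φ (ψ t) t)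
    (hψ : ∀ t ∈ Set.Icc (0:ℝ) 1, ψ t ≤ 0) {t : ℝ} (ht : t ∈ Set.Icc (0:ℝ) 1) :
    φ t ≤ φ 0 := by
  have hanti : AntitoneOn φ (Set.Icc 0 1) :=
    antitoneOn_of_deriv_nonpos (convex_Icc 0 1)
      (fun s _ => (hd s).continuousAt.continuousWithinAt)
      (fun s _ => (hd s).differentiableAt.differentiableWithinAt)
      (fun s hs => by
        rw [(hd s).deriv]
        rw [interior_Icc] at hs
        exact hψ s (Set.Ioo_subset_Icc_self hs))
  exact hanti (Set.left_mem_Icc.2 zero_le_one) ht ht.1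

section

variable {d : ℕ}

private lemma line_deriv (f : EuclideanSpace ℝ (Fin d) → ℝ)
    (hf : Differentiable ℝ f) (p u : EuclideanSpace ℝ (Fin d)) (t : ℝ) :
    HasDerivAt (fun s : ℝ => f (p + s • u)) ⟪gradient f (p + t • u), u⟫ t := by
  have h0 : HasDerivAt (fun s : ℝ => p + s • u) u t := by
    simpa using ((hasDerivAt_id t).smul_const u).const_add p
  have h1 := ((hf (p + t • u)).hasGradientAt.hasFDerivAt).comp_hasDerivAt t h0
  simpa [InnerProductSpace.toDual_apply_apply, Function.comp_def] using h1

private lemma inner_op_bound (T : EuclideanSpace ℝ (Fin d) →L[ℝ] EuclideanSpace ℝ (Fin d))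
    (w : EuclideanSpace ℝ (Fin d)) : |⟪T w, w⟫| ≤ ‖T‖ * ‖w‖ ^ 2 := by
  calc |⟪T w, w⟫| ≤ ‖T w‖ * ‖w‖ := abs_real_inner_le_norm _ _
    _ ≤ (‖T‖ * ‖w‖) * ‖w‖ := by gcongr; exact T.le_opNorm w
    _ = ‖T‖ * ‖w‖ ^ 2 := by ring

private lemma taylor1 (f : EuclideanSpace ℝ (Fin d) → ℝ) (L1 : ℝ)
    (hf : Differentiable ℝ f)
    (hglip : ∀ a b : EuclideanSpace ℝ (Fin d),
      ‖gradient f a - gradient f b‖ ≤ L1 * ‖a - b‖)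
    (p u : EuclideanSpace ℝ (Fin d)) :
    f (p + u) ≤ f p + ⟪gradient f p, u⟫ + L1 / 2 * ‖u‖ ^ 2 := by
  set c1 : ℝ := ⟪gradient f p, u⟫ with hc1
  have key := phi_le (φ := fun t : ℝ => f (p + t • u) - (t * c1 + L1/2 * t^2 * ‖u‖^2))
    (ψ := fun t : ℝ => ⟪gradient f (p + t • u), u⟫ - (c1 + L1 * t * ‖u‖^2))
    (fun t => by
      have h2 : HasDerivAt (fun s : ℝ => s * c1 + L1/2 * s^2 * ‖u‖^2)
          (c1 + L1 * t * ‖u‖^2) t := by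
        have ha := (hasDerivAt_id t).mul_const c1
        have hb := ((hasDerivAt_pow 2 t).const_mul (L1/2)).mul_const (‖u‖^2)
        exact (ha.add hb).congr_deriv (by push_cast; ring)
      exact (line_deriv f hf p u t).sub h2)
    (fun t ht => by
      have h2 := hglip (p + t • u) p
      have h3 : p + t • u - p = t • u := by abel
      rw [h3] at h2
      have h4 : ‖t • u‖ = t * ‖u‖ := by
        rw [norm_smul, Real.norm_eq_abs, abs_of_nonneg ht.1]
      rw [h4] at h2
      have h5 : ⟪gradient f (p + t • u) - gradient f p, u⟫ ≤ (L1 * (t * ‖u‖)) * ‖u‖ :=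
        le_trans (real_inner_le_norm _ _) (mul_le_mul_of_nonneg_right h2 (norm_nonneg u))
      rw [inner_sub_left] at h5
      rw [← hc1] at h5
      nlinarith [h5])
    (Set.right_mem_Icc.2 zero_le_one)
  simp only [one_smul, zero_smul, add_zero] at key
  nlinarith [key]

private lemma taylor2 (f : EuclideanSpace ℝ (Fin d) → ℝ) (L2 : ℝ)
    (hf : Differentiable ℝ f) (hgd : Differentiable ℝ (gradient f))
    (hHlip : ∀ a b : EuclideanSpace ℝ (Fin d),
      ‖fderiv ℝ (gradient f) a - fderiv ℝ (gradient f) b‖ ≤ L2 * ‖a - b‖)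
    (p u : EuclideanSpace ℝ (Fin d)) :
    f (p + u) ≤ f p + ⟪gradient f p, u⟫
      + 1/2 * ⟪(fderiv ℝ (gradient f) p) u, u⟫ + L2/6 * ‖u‖^3 := by
  set c1 : ℝ := ⟪gradient f p, u⟫ with hc1
  set c2 : ℝ := ⟪(fderiv ℝ (gradient f) p) u, u⟫ with hc2
  -- derivative of the inner-product path
  have hgline : ∀ t : ℝ, HasDerivAt (fun s : ℝ => ⟪gradient f (p + s • u), u⟫)
      ⟪(fderiv ℝ (gradient f) (p + t • u)) u, u⟫ t := by
    intro t
    have h0 : HasDerivAt (fun s : ℝ => p + s • u) u t := by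
      simpa using ((hasDerivAt_id t).smul_const u).const_add p
    have h1 : HasDerivAt (fun s : ℝ => gradient f (p + s • u))
        ((fderiv ℝ (gradient f) (p + t • u)) u) t :=
      by simpa [Function.comp_def] using ((hgd (p + t • u)).hasFDerivAt).comp_hasDerivAt t h0
    have h2 := h1.inner ℝ (hasDerivAt_const t u)
    simpa using h2
  -- first-order bound on the gradient path
  have hχ : ∀ t ∈ Set.Icc (0:ℝ) 1,
      ⟪gradient f (p + t • u), u⟫ ≤ c1 + t * c2 + L2/2 * t^2 * ‖u‖^3 := by
    intro t ht
    have key := phi_le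
      (φ := fun s : ℝ => ⟪gradient f (p + s • u), u⟫ - (s * c2 + L2/2 * s^2 * ‖u‖^3))
      (ψ := fun s : ℝ => ⟪(fderiv ℝ (gradient f) (p + s • u)) u, u⟫
        - (c2 + L2 * s * ‖u‖^3))
      (fun s => by
        have h2 : HasDerivAt (fun r : ℝ => r * c2 + L2/2 * r^2 * ‖u‖^3)
            (c2 + L2 * s * ‖u‖^3) s := by
          have ha := (hasDerivAt_id s).mul_const c2
          have hb := ((hasDerivAt_pow 2 s).const_mul (L2/2)).mul_const (‖u‖^3)
          exact (ha.add hb).congr_deriv (by push_cast; ring)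
        exact (hgline s).sub h2)
      (fun s hs => by
        have h2 := hHlip (p + s • u) p
        have h3 : p + s • u - p = s • u := by abel
        rw [h3, norm_smul, Real.norm_eq_abs, abs_of_nonneg hs.1] at h2
        have h4 : ⟪(fderiv ℝ (gradient f) (p + s • u) - fderiv ℝ (gradient f) p) u, u⟫
            ≤ (L2 * (s * ‖u‖)) * (‖u‖ * ‖u‖) := by
          refine le_trans (real_inner_le_norm _ _) ?_
          have h5 : ‖(fderiv ℝ (gradient f) (p + s • u) - fderiv ℝ (gradient f) p) u‖
              ≤ (L2 * (s * ‖u‖)) * ‖u‖ :=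
            le_trans (ContinuousLinearMap.le_opNorm _ u)
              (mul_le_mul_of_nonneg_right h2 (norm_nonneg u))
          calc ‖(fderiv ℝ (gradient f) (p + s • u) - fderiv ℝ (gradient f) p) u‖ * ‖u‖
              ≤ ((L2 * (s * ‖u‖)) * ‖u‖) * ‖u‖ :=
                mul_le_mul_of_nonneg_right h5 (norm_nonneg u)
            _ = (L2 * (s * ‖u‖)) * (‖u‖ * ‖u‖) := by ring
        rw [ContinuousLinearMap.sub_apply, inner_sub_left] at h4
        rw [← hc2] at h4
        nlinarith [h4])
      ht
    simp only [zero_smul, add_zero, ← hc1] at key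
    nlinarith [key]
  -- second-order bound on f
  have key := phi_le
    (φ := fun t : ℝ => f (p + t • u) - (t * c1 + t^2 * (c2/2) + t^3 * (L2/6 * ‖u‖^3)))
    (ψ := fun t : ℝ => ⟪gradient f (p + t • u), u⟫
      - (c1 + t * c2 + L2/2 * t^2 * ‖u‖^3))
    (fun t => by
      have h2 : HasDerivAt (fun s : ℝ => s * c1 + s^2 * (c2/2) + s^3 * (L2/6 * ‖u‖^3))
          (c1 + t * c2 + L2/2 * t^2 * ‖u‖^3) t := by
        have ha := (hasDerivAt_id t).mul_const c1
        have hb := (hasDerivAt_pow 2 t).mul_const (c2/2)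
        have hc := (hasDerivAt_pow 3 t).mul_const (L2/6 * ‖u‖^3)
        exact ((ha.add hb).add hc).congr_deriv (by push_cast; ring)
      exact (line_deriv f hf p u t).sub h2)
    (fun t ht => by
      have := hχ t ht
      linarith)
    (Set.right_mem_Icc.2 zero_le_one)
  simp only [one_smul, zero_smul, add_zero] at key
  nlinarith [key]

end

set_option maxHeartbeats 1000000 in
/-- Theorem on iH-NCG-A: convergence guarantee of the iH-NCG-A algorithm,
which uses inexact Hessians `H_j` with `‖H_j − ∇²f(x_j)‖₂ ≤ ε₃ ≤ ε₂/12`. -/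
theorem iH_NCG_A_guarantee {d : ℕ}
    (f : EuclideanSpace ℝ (Fin d) → ℝ) (L1 L2 ε₁ ε₂ ε₃ Δ : ℝ)
    (hL1 : 0 < L1) (hL2 : 0 < L2)
    (hε₁ : 0 < ε₁) (hε₁1 : ε₁ < 1) (hε₂ : 0 < ε₂) (hε₂1 : ε₂ < 1)
    (hε₃0 : 0 ≤ ε₃) (hε₃ : ε₃ ≤ ε₂ / 12)
    (hf : ContDiff ℝ 2 f)
    (hglip : ∀ a b : EuclideanSpace ℝ (Fin d),
      ‖gradient f a - gradient f b‖ ≤ L1 * ‖a - b‖)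
    (hHlip : ∀ a b : EuclideanSpace ℝ (Fin d),
      ‖fderiv ℝ (gradient f) a - fderiv ℝ (gradient f) b‖ ≤ L2 * ‖a - b‖)
    (x₀ : EuclideanSpace ℝ (Fin d))
    (hΔ : ∀ z : EuclideanSpace ℝ (Fin d), f x₀ - f z ≤ Δ)
    (x v : ℕ → EuclideanSpace ℝ (Fin d))
    (H : ℕ → EuclideanSpace ℝ (Fin d) →L[ℝ] EuclideanSpace ℝ (Fin d))
    (hx1 : x 1 = x₀)
    (hHsym : ∀ j : ℕ, 1 ≤ j → ∀ u w : EuclideanSpace ℝ (Fin d),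
      ⟪(H j) u, w⟫ = ⟪u, (H j) w⟫)
    (hHapprox : ∀ j : ℕ, 1 ≤ j → ‖H j - fderiv ℝ (gradient f) (x j)‖ ≤ ε₃)
    (hv : ∀ j : ℕ, 1 ≤ j → ‖v j‖ = 1)
    (hmin : ∀ j : ℕ, 1 ≤ j → ∀ u : EuclideanSpace ℝ (Fin d), ‖u‖ = 1 →
      ⟪(H j) u, u⟫ ≥ ⟪(H j) (v j), v j⟫ - max ε₂ ‖gradient f (x j)‖ / 2)
    (hupd : ∀ j : ℕ, 1 ≤ j →
      x (j + 1) =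
        if -(ε₂ ^ 2 / (2 * L2 ^ 2)) * ⟪(H j) (v j), v j⟫ - 5 * ε₂ ^ 3 / (24 * L2 ^ 2) >
            ‖gradient f (x j)‖ ^ 2 / (2 * L1) then
          x j - ((ε₂ / L2) * sgn ⟪gradient f (x j), v j⟫) • v j
        else
          x j - (1 / L1) • gradient f (x j)) :
    ∃ jstar : ℕ, 1 ≤ jstar ∧
      (⟪(H jstar) (v jstar), v jstar⟫ > -ε₂ / 2 ∧ ‖gradient f (x jstar)‖ ≤ ε₁) ∧
      (∀ i : ℕ, 1 ≤ i → i < jstar →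
        ¬(⟪(H i) (v i), v i⟫ > -ε₂ / 2 ∧ ‖gradient f (x i)‖ ≤ ε₁)) ∧
      (jstar : ℝ) ≤ 1 + max (24 * L2 ^ 2 / ε₂ ^ 3) (2 * L1 / ε₁ ^ 2) * Δ ∧
      ‖gradient f (x jstar)‖ ≤ ε₁ ∧
      ∀ u : EuclideanSpace ℝ (Fin d), ‖u‖ = 1 →
        ⟪(fderiv ℝ (gradient f) (x jstar)) u, u⟫ ≥ -(2 * max ε₂ ε₁) := by
  classical
  have hfd : Differentiable ℝ f := hf.differentiable (by norm_num)
  have hgd : Differentiable ℝ (gradient f) := by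
    have h1 : ContDiff ℝ 1 (fderiv ℝ f) := hf.fderiv_right (by norm_num)
    have h2 : gradient f = fun y =>
        (InnerProductSpace.toDual ℝ (EuclideanSpace ℝ (Fin d))).symm (fderiv ℝ f y) := rfl
    rw [h2]
    exact (((InnerProductSpace.toDual ℝ
      (EuclideanSpace ℝ (Fin d))).symm.contDiff).comp h1).differentiable one_ne_zero
  set P : ℕ → Prop :=
    fun j => ⟪(H j) (v j), v j⟫ > -ε₂ / 2 ∧ ‖gradient f (x j)‖ ≤ ε₁ with hPdef
  set δ : ℝ := min (ε₂ ^ 3 / (24 * L2 ^ 2)) (ε₁ ^ 2 / (2 * L1)) with hδdef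
  have hδpos : 0 < δ := lt_min (by positivity) (by positivity)
  have hδ1 : δ ≤ ε₂ ^ 3 / (24 * L2 ^ 2) := min_le_left _ _
  have hδ2 : δ ≤ ε₁ ^ 2 / (2 * L1) := min_le_right _ _
  -- approximation of the Hessian quadratic form
  have happrox : ∀ j : ℕ, 1 ≤ j → ∀ w : EuclideanSpace ℝ (Fin d), ‖w‖ = 1 →
      |⟪(H j) w, w⟫ - ⟪(fderiv ℝ (gradient f) (x j)) w, w⟫| ≤ ε₃ := by
    intro j hj w hw
    have h1 := inner_op_bound (H j - fderiv ℝ (gradient f) (x j)) w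
    rw [ContinuousLinearMap.sub_apply, inner_sub_left, hw] at h1
    have h2 := hHapprox j hj
    nlinarith [h1, h2]
  -- the per-step descent
  have hdesc : ∀ j : ℕ, 1 ≤ j → ¬ P j → f (x (j + 1)) ≤ f (x j) - δ := by
    intro j hj hP
    have hvj := hv j hj
    have hPor : ⟪(H j) (v j), v j⟫ ≤ -ε₂ / 2 ∨ ε₁ < ‖gradient f (x j)‖ := by
      by_contra hc
      push_neg at hc
      exact hP ⟨hc.1, hc.2⟩
    have hap := happrox j hj (v j) hvj
    have hG2 : ε₁ < ‖gradient f (x j)‖ →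
        ε₁ ^ 2 / (2 * L1) ≤ ‖gradient f (x j)‖ ^ 2 / (2 * L1) := by
      intro h
      gcongr
    rw [hupd j hj]
    by_cases hcond : -(ε₂ ^ 2 / (2 * L2 ^ 2)) * ⟪(H j) (v j), v j⟫
        - 5 * ε₂ ^ 3 / (24 * L2 ^ 2) > ‖gradient f (x j)‖ ^ 2 / (2 * L1)
    · rw [if_pos hcond]
      set g := gradient f (x j) with hg
      set σ : ℝ := sgn ⟪g, v j⟫ with hσ
      have hrw : x j - (ε₂ / L2 * σ) • v j = x j + (-(ε₂ / L2 * σ)) • v j := by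
        rw [neg_smul, sub_eq_add_neg]
      rw [hrw]
      have ht2 := taylor2 f L2 hfd hgd hHlip (x j) ((-(ε₂ / L2 * σ)) • v j)
      rw [← hg] at ht2
      set q : ℝ := ⟪(H j) (v j), v j⟫ with hq
      set B : ℝ := ⟪(fderiv ℝ (gradient f) (x j)) (v j), v j⟫ with hB
      -- pieces
      have hσ2 : σ ^ 2 = 1 := sgn_sq _
      have habsσ : |σ| = 1 := abs_sgn _
      have hnorm : ‖(-(ε₂ / L2 * σ)) • v j‖ = ε₂ / L2 := by
        rw [norm_smul, hvj, Real.norm_eq_abs, abs_neg, abs_mul, habsσ,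
          abs_of_pos (div_pos hε₂ hL2)]
        ring
      have hin1 : ⟪g, (-(ε₂ / L2 * σ)) • v j⟫ = -(ε₂ / L2 * |⟪g, v j⟫|) := by
        rw [real_inner_smul_right, ← sgn_mul_self ⟪g, v j⟫, ← hσ]
        ring
      have hin2 : ⟪(fderiv ℝ (gradient f) (x j)) ((-(ε₂ / L2 * σ)) • v j),
          (-(ε₂ / L2 * σ)) • v j⟫ = (ε₂ / L2) ^ 2 * B := by
        rw [map_smul, real_inner_smul_left, real_inner_smul_right, ← hB]
        linear_combination (ε₂ / L2) ^ 2 * B * hσ2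
      rw [hnorm, hin1, hin2] at ht2
      have hng : -(ε₂ / L2 * |⟪g, v j⟫|) ≤ 0 :=
        neg_nonpos.2 (mul_nonneg (div_pos hε₂ hL2).le (abs_nonneg _))
      have hBq : B ≤ q + ε₃ := by
        have := abs_le.1 hap
        linarith [this.1]
      have hX : (ε₂ / L2) ^ 2 * B ≤ (ε₂ / L2) ^ 2 * q + (ε₂ / L2) ^ 2 * ε₃ := by
        have h0 := mul_le_mul_of_nonneg_left hBq (sq_nonneg (ε₂ / L2))
        have h1 : (ε₂ / L2) ^ 2 * (q + ε₃) = (ε₂ / L2) ^ 2 * q + (ε₂ / L2) ^ 2 * ε₃ := by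
          ring
        linarith
      have he1 : L2 / 6 * (ε₂ / L2) ^ 3 = 4 * (ε₂ ^ 3 / (24 * L2 ^ 2)) := by
        field_simp
        ring
      have he2 : (ε₂ / L2) ^ 2 * ε₃ ≤ 2 * (ε₂ ^ 3 / (24 * L2 ^ 2)) := by
        have h0 : (ε₂ / L2) ^ 2 * ε₃ ≤ (ε₂ / L2) ^ 2 * (ε₂ / 12) :=
          mul_le_mul_of_nonneg_left hε₃ (sq_nonneg (ε₂ / L2))
        have h1 : (ε₂ / L2) ^ 2 * (ε₂ / 12) = 2 * (ε₂ ^ 3 / (24 * L2 ^ 2)) := by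
          field_simp
          ring
        linarith
      rcases hPor with hqle | hGbig
      · -- negative curvature is large
        have h5 : (ε₂ / L2) ^ 2 * q ≤ -(12 * (ε₂ ^ 3 / (24 * L2 ^ 2))) := by
          have h0 : (ε₂ / L2) ^ 2 * q ≤ (ε₂ / L2) ^ 2 * (-ε₂ / 2) :=
            mul_le_mul_of_nonneg_left hqle (sq_nonneg (ε₂ / L2))
          have h1 : (ε₂ / L2) ^ 2 * (-ε₂ / 2) = -(12 * (ε₂ ^ 3 / (24 * L2 ^ 2))) := by
            field_simp
            ring
          linarith
        linarith [ht2, hX, h5, he1, he2, hng, hδ1]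
      · -- gradient is large
        have h6 := hG2 hGbig
        have hbr : -(ε₂ ^ 2 / (2 * L2 ^ 2)) * q - 5 * ε₂ ^ 3 / (24 * L2 ^ 2)
            = -(1/2 * ((ε₂ / L2) ^ 2 * q)) - 5 * (ε₂ ^ 3 / (24 * L2 ^ 2)) := by
          field_simp
        rw [hbr] at hcond
        linarith [ht2, hX, he1, he2, hng, hδ2, hcond, h6]
    · rw [if_neg hcond]
      push_neg at hcond
      set g := gradient f (x j) with hg
      have hrw : x j - (1 / L1) • g = x j + (-(1 / L1)) • g := by
        rw [neg_smul, sub_eq_add_neg]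
      rw [hrw]
      have ht1 := taylor1 f L1 hfd hglip (x j) ((-(1 / L1)) • g)
      have hin1 : ⟪g, (-(1 / L1)) • g⟫ = -(1 / L1) * ‖g‖ ^ 2 := by
        rw [real_inner_smul_right, real_inner_self_eq_norm_sq]
      have hnorm : ‖(-(1 / L1)) • g‖ ^ 2 = (1 / L1) ^ 2 * ‖g‖ ^ 2 := by
        rw [norm_smul, Real.norm_eq_abs, abs_neg, abs_of_pos (by positivity : (0:ℝ) < 1 / L1)]
        ring
      rw [hin1, hnorm] at ht1
      have hstep : f (x j + (-(1 / L1)) • g) ≤ f (x j) - ‖g‖ ^ 2 / (2 * L1) := by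
        have he : -(1 / L1) * ‖g‖ ^ 2 + L1 / 2 * ((1 / L1) ^ 2 * ‖g‖ ^ 2)
            = -(‖g‖ ^ 2 / (2 * L1)) := by
          field_simp
          ring
        linarith [ht1, he.le, he.ge]
      rcases hPor with hq | hGbig
      · have he3 : ε₂ ^ 2 / (2 * L2 ^ 2) * (ε₂ / 2) = 6 * (ε₂ ^ 3 / (24 * L2 ^ 2)) := by
          field_simp
          ring
        have h5 : ε₂ ^ 2 / (2 * L2 ^ 2) * (ε₂ / 2) ≤ ε₂ ^ 2 / (2 * L2 ^ 2) * (-⟪(H j) (v j), v j⟫) := by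
          apply mul_le_mul_of_nonneg_left _ (by positivity)
          linarith
        have hbr : 5 * ε₂ ^ 3 / (24 * L2 ^ 2) = 5 * (ε₂ ^ 3 / (24 * L2 ^ 2)) := by ring
        have hbr2 : -(ε₂ ^ 2 / (2 * L2 ^ 2)) * ⟪(H j) (v j), v j⟫
            = ε₂ ^ 2 / (2 * L2 ^ 2) * (-⟪(H j) (v j), v j⟫) := by ring
        rw [hbr, hbr2] at hcond
        linarith [hstep, hcond, h5, he3.le, he3.ge, hδ1]
      · have h6 := hG2 hGbig
        linarith [hstep, h6, hδ2]
  -- accumulated descent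
  have hsum : ∀ n : ℕ, (∀ i, 1 ≤ i → i ≤ n → ¬ P i) →
      (n : ℝ) * δ ≤ f (x 1) - f (x (n + 1)) := by
    intro n
    induction n with
    | zero => intro _; simp
    | succ n ih =>
      intro hn
      have h1 := ih (fun i h1 h2 => hn i h1 (h2.trans (Nat.le_succ n)))
      have h2 := hdesc (n + 1) (by omega) (hn (n + 1) (by omega) le_rfl)
      push_cast
      linarith
  have hΔ0 : 0 ≤ Δ := by have := hΔ x₀; linarith
  have hex : ∃ j, 1 ≤ j ∧ P j := by
    by_contra hno
    push_neg at hno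
    obtain ⟨n, hn⟩ := exists_nat_gt (Δ / δ)
    have h1 := hsum n (fun i hi _ => hno i hi)
    have h2 : f (x 1) - f (x (n + 1)) ≤ Δ := by rw [hx1]; exact hΔ _
    rw [div_lt_iff₀ hδpos] at hn
    linarith
  refine ⟨Nat.find hex, (Nat.find_spec hex).1, (Nat.find_spec hex).2, ?_, ?_,
    (Nat.find_spec hex).2.2, ?_⟩
  · intro i h1i hlt hPi
    exact Nat.find_min hex hlt ⟨h1i, hPi⟩
  · -- the bound on jstar
    have hN1 : 1 ≤ Nat.find hex := (Nat.find_spec hex).1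
    have h1 := hsum (Nat.find hex - 1) (fun i hi hle => by
      intro hPi
      exact Nat.find_min hex (by omega) ⟨hi, hPi⟩)
    rw [Nat.sub_add_cancel hN1] at h1
    have h2 : f (x 1) - f (x (Nat.find hex)) ≤ Δ := by rw [hx1]; exact hΔ _
    have h3 : ((Nat.find hex - 1 : ℕ) : ℝ) = (Nat.find hex : ℝ) - 1 := by
      push_cast [Nat.cast_sub hN1]
      ring
    rw [h3] at h1
    have h4 : ((Nat.find hex : ℝ) - 1) ≤ Δ / δ := by
      rw [le_div_iff₀ hδpos]
      nlinarith [h1, h2, hδpos, (by positivity : (0:ℝ) < δ)]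
    have h5 : Δ / δ ≤ max (24 * L2 ^ 2 / ε₂ ^ 3) (2 * L1 / ε₁ ^ 2) * Δ := by
      rcases min_cases (ε₂ ^ 3 / (24 * L2 ^ 2)) (ε₁ ^ 2 / (2 * L1)) with ⟨he, _⟩ | ⟨he, _⟩
      · rw [hδdef, he]
        have : Δ / (ε₂ ^ 3 / (24 * L2 ^ 2)) = 24 * L2 ^ 2 / ε₂ ^ 3 * Δ := by
          field_simp
        rw [this]
        exact mul_le_mul_of_nonneg_right (le_max_left _ _) hΔ0
      · rw [hδdef, he]
        have : Δ / (ε₁ ^ 2 / (2 * L1)) = 2 * L1 / ε₁ ^ 2 * Δ := by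
          field_simp
        rw [this]
        exact mul_le_mul_of_nonneg_right (le_max_right _ _) hΔ0
    linarith
  · -- eigenvalue bound at termination
    intro u hu
    have hN1 : 1 ≤ Nat.find hex := (Nat.find_spec hex).1
    have hP := (Nat.find_spec hex).2
    have h1 := hmin (Nat.find hex) hN1 u hu
    have h2 : max ε₂ ‖gradient f (x (Nat.find hex))‖ ≤ max ε₂ ε₁ :=
      max_le_max le_rfl hP.2
    have h3 := happrox (Nat.find hex) hN1 u hu
    have h4 : ε₂ ≤ max ε₂ ε₁ := le_max_left _ _
    have h5 := abs_le.1 h3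
    linarith [hP.1, h5.2, h1, h2, h4, hε₃]
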